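/- Let (i,j) be a pair of distinct vertices with w_ij < w̄ and δ ∈ (0, w̄ − w_ij], and suppose z_i ≠ z_j. If there exists ε > 0 such that (z̃ᵀ(I+L)^{-1}v_ij)/(z̃ᵀv_ij) ≥ ε + δ/(2δ + (1 + λ₂(L))²), then P(z) − P(z⁺) ≥ 2δ·ε·(z_i − z_j)²/(1 + 2δ). -/

import Mathlib

open Matrix Finset

noncomputable def deg {n : ℕ} (W : Matrix (Fin n) (Fin n) ℝ) (i : Fin n) : ℝ := ∑ j, W i j

noncomputable def lap {n : ℕ} (W : Matrix (Fin n) (Fin n) ℝ) : Matrix (Fin n) (Fin n) ℝ :=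
  Matrix.diagonal (deg W) - W

noncomputable def mean {n : ℕ} (x : Fin n → ℝ) : ℝ := (∑ i, x i) / n

noncomputable def ctr {n : ℕ} (x : Fin n → ℝ) : Fin n → ℝ := fun i => x i - mean x

noncomputable def pol {n : ℕ} (x : Fin n → ℝ) : ℝ := ∑ i, (x i - mean x) ^ 2

def vij {n : ℕ} (i j : Fin n) : Fin n → ℝ :=
  fun k => (if k = i then (1 : ℝ) else 0) - (if k = j then (1 : ℝ) else 0)



section Aux
variable {n : ℕ}

lemma mul_vecMulVec' (A : Matrix (Fin n) (Fin n) ℝ) (b c : Fin n → ℝ) :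
    A * vecMulVec b c = vecMulVec (A *ᵥ b) c := by
  ext a d
  simp only [mul_apply, vecMulVec_apply, mulVec, dotProduct]
  rw [Finset.sum_mul]
  congr 1; ext k; ring

lemma vecMulVec_mul' (b c : Fin n → ℝ) (A : Matrix (Fin n) (Fin n) ℝ) :
    vecMulVec b c * A = vecMulVec b (c ᵥ* A) := by
  ext a d
  simp only [mul_apply, vecMulVec_apply, vecMul, dotProduct]
  rw [Finset.mul_sum]
  congr 1; ext k; ring

lemma vecMulVec_mulVec' (b c x : Fin n → ℝ) :
    vecMulVec b c *ᵥ x = (c ⬝ᵥ x) • b := by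
  ext a
  simp only [mulVec, dotProduct, vecMulVec_apply, Pi.smul_apply, smul_eq_mul]
  rw [Finset.sum_mul]
  congr 1; ext k; ring

lemma vecMul_vecMulVec' (x b c : Fin n → ℝ) :
    x ᵥ* vecMulVec b c = (x ⬝ᵥ b) • c := by
  ext a
  simp only [vecMul, dotProduct, vecMulVec_apply, Pi.smul_apply, smul_eq_mul]
  rw [Finset.sum_mul]
  congr 1; ext k; ring

lemma lap_mulVec_one (W : Matrix (Fin n) (Fin n) ℝ) :
    lap W *ᵥ (fun _ => (1:ℝ)) = 0 := by
  ext a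
  simp [lap, sub_mulVec, mulVec, dotProduct, deg, diagonal]

lemma dot_vij (x : Fin n → ℝ) (i j : Fin n) : x ⬝ᵥ vij i j = x i - x j := by
  simp [vij, dotProduct, mul_sub, Finset.sum_sub_distrib, mul_ite]

lemma vij_dot (x : Fin n → ℝ) (i j : Fin n) : vij i j ⬝ᵥ x = x i - x j := by
  rw [dotProduct_comm, dot_vij]

lemma vij_dot_vij {i j : Fin n} (hij : i ≠ j) : vij i j ⬝ᵥ vij i j = 2 := by
  rw [vij_dot]
  simp [vij, hij, hij.symm]; ring

lemma quad_lap (W : Matrix (Fin n) (Fin n) ℝ) (hsymm : W.IsSymm) (x : Fin n → ℝ) :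
    x ⬝ᵥ (lap W *ᵥ x) = (1/2) * ∑ a, ∑ b, W a b * (x a - x b)^2 := by
  have hs : ∀ a b, W b a = W a b := fun a b => congrFun (congrFun hsymm a) b
  have h1 : ∑ a, ∑ b, W a b * (x a - x b)^2
      = (∑ a, ∑ b, W a b * x a^2) + (∑ a, ∑ b, W a b * x b^2)
        - 2 * ∑ a, ∑ b, W a b * x a * x b := by
    rw [Finset.mul_sum, ← Finset.sum_add_distrib, ← Finset.sum_sub_distrib]
    refine Finset.sum_congr rfl fun a _ => ?_
    rw [Finset.mul_sum, ← Finset.sum_add_distrib, ← Finset.sum_sub_distrib]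
    exact Finset.sum_congr rfl fun b _ => by ring
  have h2 : ∑ a, ∑ b, W a b * x b^2 = ∑ a, ∑ b, W a b * x a^2 := by
    rw [Finset.sum_comm]
    exact Finset.sum_congr rfl fun a _ => Finset.sum_congr rfl fun b _ => by rw [hs]
  have h3 : x ⬝ᵥ (lap W *ᵥ x)
      = (∑ a, ∑ b, W a b * x a^2) - ∑ a, ∑ b, W a b * x a * x b := by
    simp only [lap, sub_mulVec, dotProduct_sub]
    congr 1
    · simp only [dotProduct, mulVec_diagonal, deg]
      refine Finset.sum_congr rfl fun a _ => ?_
      rw [Finset.sum_mul, Finset.mul_sum]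
      exact Finset.sum_congr rfl fun b _ => by ring
    · show ∑ a, x a * ∑ b, W a b * x b = _
      refine Finset.sum_congr rfl fun a _ => ?_
      rw [Finset.mul_sum]
      exact Finset.sum_congr rfl fun b _ => by ring
  rw [h3, h1, h2]; ring

lemma lap_posSemidef (W : Matrix (Fin n) (Fin n) ℝ) (hsymm : W.IsSymm)
    (hW : ∀ i j, 0 ≤ W i j) (hL : (lap W).IsHermitian) : (lap W).PosSemidef := by
  refine Matrix.PosSemidef.of_dotProduct_mulVec_nonneg hL fun x => ?_
  have hst : star x = x := by simp
  rw [hst, quad_lap W hsymm]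
  apply mul_nonneg (by norm_num)
  refine Finset.sum_nonneg fun a _ => Finset.sum_nonneg fun b _ => ?_
  exact mul_nonneg (hW a b) (sq_nonneg _)

end Aux


lemma key_spectral {n : ℕ} (hn : 2 ≤ n) (L : Matrix (Fin n) (Fin n) ℝ) (hL : L.IsHermitian)
    (hpsd : L.PosSemidef)
    (hker : L *ᵥ (fun _ => (1:ℝ)) = 0)
    (μ : Fin n → ℝ) (hmono : Monotone μ)
    (hperm : ∃ σ : Equiv.Perm (Fin n), hL.eigenvalues = μ ∘ σ)
    (x : Fin n → ℝ) (hx : (fun _ => (1:ℝ)) ⬝ᵥ x = 0) :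
    μ ⟨1, Nat.lt_of_succ_le hn⟩ * (x ⬝ᵥ x) ≤ x ⬝ᵥ (L *ᵥ x) := by
  obtain ⟨σ, hσ⟩ := hperm
  set lam2 : ℝ := μ ⟨1, by omega⟩ with hlam2
  have hxLx : 0 ≤ x ⬝ᵥ (L *ᵥ x) := by
    have := hpsd.dotProduct_mulVec_nonneg x
    simpa using this
  by_cases hpos : 0 < lam2
  swap
  · push_neg at hpos
    calc lam2 * (x ⬝ᵥ x) ≤ 0 := mul_nonpos_of_nonpos_of_nonneg hpos (by
          simpa [dotProduct] using Finset.sum_nonneg fun k _ => mul_self_nonneg (x k))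
    _ ≤ x ⬝ᵥ (L *ᵥ x) := hxLx
  -- main case
  set b := hL.eigenvectorBasis with hb
  set lam := hL.eigenvalues with hlam
  set B : Fin n → (Fin n → ℝ) := fun k => ⇑(b k) with hB
  set toE : (Fin n → ℝ) → EuclideanSpace ℝ (Fin n) := fun y => (WithLp.equiv 2 (Fin n → ℝ)).symm y with htoE
  have hinner : ∀ p q : EuclideanSpace ℝ (Fin n),
      (inner ℝ p q : ℝ) = (WithLp.equiv _ _ p) ⬝ᵥ (WithLp.equiv _ _ q) := by
    intro p q
    simp only [EuclideanSpace.inner_eq_star_dotProduct, star_trivial]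
    exact dotProduct_comm _ _
  have key : ∀ v : Fin n → ℝ, ∀ k, (WithLp.equiv 2 (Fin n → ℝ)) (b.repr (toE v)) k = B k ⬝ᵥ v := by
    intro v k
    show b.repr (toE v) k = _
    rw [OrthonormalBasis.repr_apply_apply, hinner]
    rfl
  have parseval : ∀ y w : Fin n → ℝ, y ⬝ᵥ w = ∑ k, (B k ⬝ᵥ y) * (B k ⬝ᵥ w) := by
    intro y w
    have h1 := b.repr.inner_map_map (toE y) (toE w)
    rw [hinner, hinner] at h1
    have h2 : (WithLp.equiv 2 (Fin n → ℝ)) (toE y) = y := rfl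
    have h3 : (WithLp.equiv 2 (Fin n → ℝ)) (toE w) = w := rfl
    rw [h2, h3] at h1
    rw [← h1]
    simp only [dotProduct]
    exact Finset.sum_congr rfl fun k _ => by rw [key, key]; rfl
  have hLB : ∀ (k : Fin n) (y : Fin n → ℝ), B k ⬝ᵥ (L *ᵥ y) = lam k * (B k ⬝ᵥ y) := by
    intro k y
    rw [dotProduct_mulVec]
    have hLt : Lᵀ = L := by rw [← conjTranspose_eq_transpose_of_trivial]; exact hL.eq
    have hsym : B k ᵥ* L = L *ᵥ B k := by
      rw [← Matrix.mulVec_transpose, hLt]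
    rw [hsym, hL.mulVec_eigenvectorBasis, smul_dotProduct]
    rfl
  set ones : Fin n → ℝ := fun _ => (1:ℝ) with hones
  set c : Fin n → ℝ := fun k => B k ⬝ᵥ x with hc
  set d : Fin n → ℝ := fun k => B k ⬝ᵥ ones with hd
  have F3 : ∀ k, lam k * d k = 0 := by
    intro k
    have := hLB k ones
    rw [hker] at this
    simpa [hd] using this.symm
  set k0 : Fin n := σ.symm ⟨0, by omega⟩ with hk0
  have hlamge : ∀ k, k ≠ k0 → lam2 ≤ lam k := by
    intro k hk
    have hσk : σ k ≠ ⟨0, by omega⟩ := fun h => hk (by rw [hk0, ← h, Equiv.symm_apply_apply])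
    have h1 : (⟨1, by omega⟩ : Fin n) ≤ σ k := by
      rw [Fin.le_def]
      have := Fin.val_ne_of_ne hσk
      simp at this ⊢
      omega
    have h2 := hmono h1
    rw [hlam2]
    calc μ ⟨1, by omega⟩ ≤ μ (σ k) := h2
    _ = lam k := by rw [hσ]; rfl
  have hdk : ∀ k, k ≠ k0 → d k = 0 := by
    intro k hk
    have h1 := F3 k
    have h2 : lam k ≠ 0 := by
      have := hlamge k hk
      nlinarith
    exact (mul_eq_zero.mp h1).resolve_left h2
  have hones_dot : ones ⬝ᵥ ones = (n : ℝ) := by simp [hones, dotProduct]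
  have hdk0 : d k0 ≠ 0 := by
    intro h0
    have h1 := parseval ones ones
    rw [hones_dot] at h1
    have h2 : ∑ k, (B k ⬝ᵥ ones) * (B k ⬝ᵥ ones) = 0 := by
      refine Finset.sum_eq_zero fun k _ => ?_
      by_cases hk : k = k0
      · rw [hk]; change d k0 * d k0 = 0; rw [h0]; ring
      · change d k * d k = 0; rw [hdk k hk]; ring
    rw [h2] at h1
    have h3 : (2:ℝ) ≤ (n:ℝ) := by exact_mod_cast hn
    linarith
  have hck0 : c k0 = 0 := by
    have h1 : ones ⬝ᵥ x = 0 := hx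
    rw [parseval ones x] at h1
    have h2 : ∑ k, (B k ⬝ᵥ ones) * (B k ⬝ᵥ x) = d k0 * c k0 := by
      refine Finset.sum_eq_single k0 (fun k _ hk => ?_) (fun h => absurd (Finset.mem_univ k0) h)
      change d k * c k = 0
      rw [hdk k hk]; ring
    rw [h2] at h1
    exact (mul_eq_zero.mp h1).resolve_left hdk0
  have F1 : x ⬝ᵥ x = ∑ k, c k * c k := parseval x x
  have F2 : x ⬝ᵥ (L *ᵥ x) = ∑ k, lam k * (c k * c k) := by
    rw [parseval x (L *ᵥ x)]
    refine Finset.sum_congr rfl fun k _ => ?_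
    rw [hLB k x]
    change (c k) * (lam k * c k) = _
    ring
  rw [F1, F2, Finset.mul_sum]
  refine Finset.sum_le_sum fun k _ => ?_
  by_cases hk : k = k0
  · rw [hk, hck0]; simp
  · have h1 := hlamge k hk
    have h2 : 0 ≤ c k * c k := mul_self_nonneg _
    nlinarith


section PolAux
variable {n : ℕ}

lemma sum_eq_n_mean (hn : (n:ℝ) ≠ 0) (x : Fin n → ℝ) : ∑ k, x k = n * mean x := by
  rw [mean]; field_simp

lemma sum_ctr (hn : (n:ℝ) ≠ 0) (x : Fin n → ℝ) : ∑ k, ctr x k = 0 := by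
  simp only [ctr, Finset.sum_sub_distrib, Finset.sum_const, card_univ, Fintype.card_fin,
    nsmul_eq_mul]
  rw [sum_eq_n_mean hn]
  ring

lemma pol_eq_sum_ctr_sq (x : Fin n → ℝ) : pol x = ∑ k, (ctr x k)^2 := rfl

lemma ctr_dot_ctr (hn : (n:ℝ) ≠ 0) (z u : Fin n → ℝ) :
    ∑ k, ctr z k * ctr u k = ctr z ⬝ᵥ u := by
  have h1 : ∀ k, ctr z k * ctr u k = ctr z k * u k - mean u * ctr z k := by
    intro k; simp only [ctr]; ring
  simp only [h1, Finset.sum_sub_distrib, ← Finset.mul_sum, sum_ctr hn z, dotProduct]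
  ring

lemma pol_le_dot (hn : (n:ℝ) ≠ 0) (x : Fin n → ℝ) : pol x ≤ x ⬝ᵥ x := by
  have h1 : ∀ k, (x k - mean x)^2 = x k * x k - 2 * mean x * x k + mean x ^2 := by
    intro k; ring
  rw [pol]
  simp only [h1, Finset.sum_add_distrib, Finset.sum_sub_distrib, ← Finset.mul_sum,
    Finset.sum_const, card_univ, Fintype.card_fin, nsmul_eq_mul]
  simp only [dotProduct]
  have hs := sum_eq_n_mean hn x
  have hn0 : 0 ≤ (n:ℝ) := Nat.cast_nonneg n
  have key : 2 * mean x * (∑ i, x i) = 2 * (n:ℝ) * (mean x)^2 := by rw [hs]; ring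
  linarith [mul_nonneg hn0 (sq_nonneg (mean x)), key]

lemma pol_diff (hn : (n:ℝ) ≠ 0) (z u : Fin n → ℝ) (c : ℝ) :
    pol z - pol (fun k => z k - c * u k) = 2*c*(ctr z ⬝ᵥ u) - c^2 * pol u := by
  have hm : mean (fun k => z k - c * u k) = mean z - c * mean u := by
    simp only [mean, Finset.sum_sub_distrib, ← Finset.mul_sum]
    ring
  have h1 : pol (fun k => z k - c * u k) = ∑ k, (ctr z k - c * ctr u k)^2 := by
    rw [pol]
    refine Finset.sum_congr rfl fun k _ => ?_
    rw [hm]; simp only [ctr]; ring_nf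
  have h2 : ∀ k, (ctr z k - c * ctr u k)^2
      = (ctr z k)^2 - 2*c*(ctr z k * ctr u k) + c^2 * (ctr u k)^2 := by intro k; ring
  rw [h1]
  simp only [h2, Finset.sum_add_distrib, Finset.sum_sub_distrib, ← Finset.mul_sum]
  rw [ctr_dot_ctr hn z u, pol_eq_sum_ctr_sq z, ← pol_eq_sum_ctr_sq u]
  ring

end PolAux

/-- Theorem 1, lower bound: if
`z̃ᵀ(I+L)⁻¹v_ij / z̃ᵀv_ij ≥ ε + δ/(2δ + (1 + λ₂(L))²)` for some `ε > 0`, then the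
reduction in polarization is at least `2δε(z_i - z_j)² / (1 + 2δ)`.
Here `μ` lists the eigenvalues of `L` with multiplicity in increasing order. -/
theorem stmt_7 {n : ℕ} (hn : 2 ≤ n) (wbar : ℝ) (hwbar : 0 < wbar)
    (W : Matrix (Fin n) (Fin n) ℝ)
    (hsymm : W.IsSymm) (hdiag : ∀ i, W i i = 0)
    (hW : ∀ i j, 0 ≤ W i j ∧ W i j ≤ wbar)
    (s : Fin n → ℝ) (i j : Fin n) (hij : i ≠ j)
    (hwij : W i j < wbar)
    (δ : ℝ) (hδ0 : 0 < δ) (hδ : δ ≤ wbar - W i j)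
    (z zp : Fin n → ℝ)
    (hz : z = (1 + lap W)⁻¹ *ᵥ s)
    (hzp : zp = (1 + (lap W + δ • vecMulVec (vij i j) (vij i j)))⁻¹ *ᵥ s)
    (hzij : z i ≠ z j)
    (hL : (lap W).IsHermitian)
    (μ : Fin n → ℝ) (hmono : Monotone μ)
    (hperm : ∃ σ : Equiv.Perm (Fin n), hL.eigenvalues = μ ∘ σ)
    (ε : ℝ) (hε : 0 < ε)
    (hratio : (ctr z ⬝ᵥ ((1 + lap W)⁻¹ *ᵥ vij i j)) / (ctr z ⬝ᵥ vij i j) ≥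
      ε + δ / (2 * δ + (1 + μ ⟨1, by omega⟩) ^ 2)) :
    pol z - pol zp ≥ 2 * δ * ε * (z i - z j) ^ 2 / (1 + 2 * δ) := by
  have hnR : (n:ℝ) ≠ 0 := by positivity
  set L : Matrix (Fin n) (Fin n) ℝ := lap W with hLdef
  set v : Fin n → ℝ := vij i j with hvdef
  set M : Matrix (Fin n) (Fin n) ℝ := 1 + L with hMdef
  have hpsd : L.PosSemidef := lap_posSemidef W hsymm (fun a b => (hW a b).1) hL
  have hMpd : M.PosDef := Matrix.PosDef.add_posSemidef Matrix.PosDef.one hpsd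
  have hMunit : IsUnit M.det := hMpd.det_pos.ne'.isUnit
  have hMMinv : M * M⁻¹ = 1 := Matrix.mul_nonsing_inv _ hMunit
  have hMinvM : M⁻¹ * M = 1 := Matrix.nonsing_inv_mul _ hMunit
  have hLt : Lᵀ = L := by rw [← conjTranspose_eq_transpose_of_trivial]; exact hL.eq
  have hMt : Mᵀ = M := by rw [hMdef, Matrix.transpose_add, Matrix.transpose_one, hLt]
  have hMit : (M⁻¹)ᵀ = M⁻¹ := by rw [Matrix.transpose_nonsing_inv, hMt]
  have hvecMulInv : ∀ y : Fin n → ℝ, y ᵥ* M⁻¹ = M⁻¹ *ᵥ y := by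
    intro y; rw [← Matrix.mulVec_transpose, hMit]
  set u : Fin n → ℝ := M⁻¹ *ᵥ v with hudef
  have hMu : M *ᵥ u = v := by rw [hudef, Matrix.mulVec_mulVec, hMMinv, Matrix.one_mulVec]
  set q : ℝ := v ⬝ᵥ u with hqdef
  set t : ℝ := u ⬝ᵥ u with htdef
  have hMvec_u : M *ᵥ u = u + L *ᵥ u := by
    rw [hMdef, Matrix.add_mulVec, Matrix.one_mulVec]
  have huLu : 0 ≤ u ⬝ᵥ (L *ᵥ u) := by simpa using hpsd.dotProduct_mulVec_nonneg u
  have ht0 : 0 ≤ t := by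
    rw [htdef, dotProduct]
    exact Finset.sum_nonneg fun k _ => mul_self_nonneg (u k)
  have hq_eq : q = t + u ⬝ᵥ (L *ᵥ u) := by
    rw [hqdef, ← hMu, hMvec_u, add_dotProduct, dotProduct_comm (L *ᵥ u) u, ← htdef]
  have htq : t ≤ q := by rw [hq_eq]; linarith
  have hq0 : 0 ≤ q := le_trans ht0 htq
  have hvv : v ⬝ᵥ v = 2 := vij_dot_vij hij
  have hcauchy : q^2 ≤ 2 * t := by
    have h1 := Finset.sum_mul_sq_le_sq_mul_sq Finset.univ v u
    have h2 : ∑ k, v k * u k = q := by rw [hqdef, dotProduct]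
    have h3 : ∑ k, v k ^2 = 2 := by
      rw [← hvv]; simp only [dotProduct, pow_two]
    have h4 : ∑ k, u k ^2 = t := by
      rw [htdef]; simp only [dotProduct, pow_two]
    rw [h2, h3, h4] at h1
    exact h1
  have hq2 : q ≤ 2 := by nlinarith [hcauchy, htq, hq0, sq_nonneg (q - 2)]
  -- ones facts
  set ones : Fin n → ℝ := fun _ => (1:ℝ) with honesdef
  have hLones : L *ᵥ ones = 0 := lap_mulVec_one W
  have hMones : M *ᵥ ones = ones := by
    rw [hMdef, Matrix.add_mulVec, Matrix.one_mulVec, hLones, add_zero]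
  have hMinvones : M⁻¹ *ᵥ ones = ones := by
    conv_lhs => rw [← hMones]
    rw [Matrix.mulVec_mulVec, hMinvM, Matrix.one_mulVec]
  have huones : ones ⬝ᵥ u = 0 := by
    rw [hudef, Matrix.dotProduct_mulVec, hvecMulInv, hMinvones, hvdef, dot_vij]
    simp [honesdef]
  -- spectral facts
  set lam2 : ℝ := μ ⟨1, by omega⟩ with hlam2def
  have hlam2nonneg : 0 ≤ lam2 := by
    obtain ⟨σ, hσ⟩ := hperm
    have h1 := hpsd.eigenvalues_nonneg (σ.symm ⟨1, by omega⟩)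
    rw [show hpsd.1.eigenvalues = hL.eigenvalues from rfl, hσ] at h1
    simpa using h1
  have hspec : lam2 * t ≤ u ⬝ᵥ (L *ᵥ u) :=
    key_spectral hn L hL hpsd hLones μ hmono hperm u huones
  have htb : t * (1 + lam2)^2 ≤ 2 := by
    rcases eq_or_lt_of_le ht0 with h | h
    · rw [← h]; norm_num
    · have hLu2 : lam2^2 * t ≤ (L *ᵥ u) ⬝ᵥ (L *ᵥ u) := by
        have hc := Finset.sum_mul_sq_le_sq_mul_sq Finset.univ u (L *ᵥ u)
        have e1 : ∑ k, u k * (L *ᵥ u) k = u ⬝ᵥ (L *ᵥ u) := rfl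
        have e2 : ∑ k, u k ^2 = t := by
          rw [htdef]; simp only [dotProduct, pow_two]
        have e3 : ∑ k, (L *ᵥ u) k ^2 = (L *ᵥ u) ⬝ᵥ (L *ᵥ u) := by
          simp only [dotProduct, pow_two]
        rw [e1, e2, e3] at hc
        have s1 : (lam2 * t) * (lam2 * t) ≤ (u ⬝ᵥ (L *ᵥ u)) * (u ⬝ᵥ (L *ᵥ u)) :=
          mul_self_le_mul_self (mul_nonneg hlam2nonneg ht0) hspec
        have s2 : t * (lam2^2 * t) ≤ t * ((L *ᵥ u) ⬝ᵥ (L *ᵥ u)) := by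
          calc t * (lam2^2 * t) = (lam2 * t) * (lam2 * t) := by ring
          _ ≤ (u ⬝ᵥ (L *ᵥ u)) * (u ⬝ᵥ (L *ᵥ u)) := s1
          _ = (u ⬝ᵥ (L *ᵥ u))^2 := by ring
          _ ≤ t * ((L *ᵥ u) ⬝ᵥ (L *ᵥ u)) := hc
        exact le_of_mul_le_mul_left s2 h
      have h2 : (2:ℝ) = t + 2 * (u ⬝ᵥ (L *ᵥ u)) + (L *ᵥ u) ⬝ᵥ (L *ᵥ u) := by
        have h2' : v ⬝ᵥ v = t + 2 * (u ⬝ᵥ (L *ᵥ u)) + (L *ᵥ u) ⬝ᵥ (L *ᵥ u) := by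
          conv_lhs => rw [← hMu, hMvec_u]
          rw [add_dotProduct, dotProduct_add, dotProduct_add,
            dotProduct_comm (L *ᵥ u) u, ← htdef]
          ring
        rw [hvv] at h2'
        exact h2'
      have expand : t * (1 + lam2)^2 = t + 2 * (lam2 * t) + lam2^2 * t := by ring
      linarith [hspec, hLu2, h2, expand]
  -- Sherman-Morrison
  set D : ℝ := 1 + δ * q with hDdef
  have hD : 0 < D := by
    have := mul_nonneg hδ0.le hq0
    rw [hDdef]; linarith
  set k' : ℝ := δ / D with hk'def
  set X : Matrix (Fin n) (Fin n) ℝ := vecMulVec v u with hXdef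
  set N : Matrix (Fin n) (Fin n) ℝ := M⁻¹ - k' • vecMulVec u u with hNdef
  have e1 : M * N = 1 - k' • X := by
    rw [hNdef, Matrix.mul_sub, Matrix.mul_smul, mul_vecMulVec', hMu, hMMinv, hXdef]
  have e2 : vecMulVec v v * N = X - (k' * q) • X := by
    rw [hNdef, Matrix.mul_sub, Matrix.mul_smul, vecMulVec_mul', hvecMulInv, ← hudef,
      vecMulVec_mul', vecMul_vecMulVec', ← hqdef, ← hXdef]
    congr 1
    ext a b
    simp only [vecMulVec_apply, Matrix.smul_apply, Pi.smul_apply, smul_eq_mul, hXdef]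
    ring
  have hcoef : δ - k' - δ * (k' * q) = 0 := by
    rw [hk'def]
    field_simp
    ring
  have hSM : (M + δ • vecMulVec v v) * N = 1 := by
    calc (M + δ • vecMulVec v v) * N = M * N + δ • (vecMulVec v v * N) := by
          rw [Matrix.add_mul, Matrix.smul_mul]
    _ = 1 - k' • X + δ • (X - (k' * q) • X) := by rw [e1, e2]
    _ = 1 + (δ - k' - δ * (k' * q)) • X := by module
    _ = 1 := by rw [hcoef, zero_smul, add_zero]
  have hinv : (1 + (L + δ • vecMulVec v v))⁻¹ = N := by
    rw [← add_assoc, ← hMdef]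
    exact Matrix.inv_eq_right_inv hSM
  -- expressed opinions after perturbation
  set a : ℝ := z i - z j with hadef
  have ha0 : a ≠ 0 := sub_ne_zero_of_ne hzij
  have hus : u ⬝ᵥ s = a := by
    have h1 : v ⬝ᵥ (M⁻¹ *ᵥ s) = u ⬝ᵥ s := by
      rw [Matrix.dotProduct_mulVec, hvecMulInv, hudef]
    rw [← h1, ← hz, hvdef, vij_dot, hadef]
  set c : ℝ := k' * a with hcdef
  have hzp2 : zp = fun k => z k - c * u k := by
    rw [hzp, hinv, hNdef, Matrix.sub_mulVec, smul_mulVec,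
      vecMulVec_mulVec', hus, ← hz]
    funext k
    simp only [Pi.sub_apply, Pi.smul_apply, smul_eq_mul, smul_smul, hcdef]
  -- ratio hypothesis
  set R : ℝ := ctr z ⬝ᵥ u with hRdef
  have hctrv : ctr z ⬝ᵥ v = a := by
    rw [hvdef, dot_vij, hadef]
    simp only [ctr]
    ring
  set P : ℝ := 2 * δ + (1 + lam2)^2 with hPdef
  have hP : 0 < P := by
    have := sq_nonneg (1 + lam2)
    rw [hPdef]; linarith
  have hratio' : R / a ≥ ε + δ / P := by rw [← hctrv]; exact hratio
  -- polarization difference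
  have hdiff : pol z - pol zp = 2*c*R - c^2 * pol u := by
    rw [hzp2, pol_diff hnR z u c, hRdef]
  have hpolu : pol u ≤ t := by rw [htdef]; exact pol_le_dot hnR u
  have hpolu0 : 0 ≤ pol u := Finset.sum_nonneg fun k _ => sq_nonneg _
  -- final arithmetic
  have hRra : R = (R / a) * a := by field_simp
  set r : ℝ := R / a with hrdef
  have hβ : δ * t / (2 * D) ≤ δ / P := by
    rw [div_le_div_iff₀ (by linarith) hP]
    have h2 : t * P ≤ 2 * D := by
      have e : t * P = 2 * (δ * t) + t * (1 + lam2)^2 := by rw [hPdef]; ring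
      have m1 : δ * t ≤ δ * q := mul_le_mul_of_nonneg_left htq hδ0.le
      rw [hDdef] at *
      linarith [htb, e, m1]
    calc δ * t * P = δ * (t * P) := by ring
    _ ≤ δ * (2 * D) := mul_le_mul_of_nonneg_left h2 hδ0.le
  have hεr : ε ≤ r - δ * t / (2 * D) := by linarith [hratio', hβ]
  have hc2t : c^2 * pol u ≤ c^2 * t := mul_le_mul_of_nonneg_left hpolu (sq_nonneg c)
  have hkey : 2*c*R - c^2 * t = (2 * δ * a^2 / D) * (r - δ * t / (2 * D)) := by
    rw [hcdef, hk'def, hRra]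
    field_simp
  have ha2 : 0 < a^2 := by positivity
  have hfrac0 : 0 ≤ 2 * δ * a^2 / D := by positivity
  have hstep2 : (2 * δ * a^2 / D) * ε ≤ 2*c*R - c^2 * t := by
    rw [hkey]
    exact mul_le_mul_of_nonneg_left hεr hfrac0
  have hDle : D ≤ 1 + 2 * δ := by
    have := mul_le_mul_of_nonneg_left hq2 hδ0.le
    rw [hDdef]; linarith
  have hstep3 : 2 * δ * ε * a^2 / (1 + 2 * δ) ≤ (2 * δ * a^2 / D) * ε := by
    rw [div_mul_eq_mul_div, div_le_div_iff₀ (by linarith) hD]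
    have hnn : 0 ≤ 2 * δ * ε * a^2 := by positivity
    calc 2 * δ * ε * a^2 * D ≤ 2 * δ * ε * a^2 * (1 + 2 * δ) :=
          mul_le_mul_of_nonneg_left hDle hnn
    _ = 2 * δ * a^2 * ε * (1 + 2 * δ) := by ring
  have final : 2 * δ * ε * a ^ 2 / (1 + 2 * δ) ≤ pol z - pol zp :=
    calc 2 * δ * ε * a ^ 2 / (1 + 2 * δ) ≤ (2 * δ * a^2 / D) * ε := hstep3
    _ ≤ 2*c*R - c^2 * t := hstep2
    _ ≤ 2*c*R - c^2 * pol u := by linarith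
    _ = pol z - pol zp := hdiff.symm
  exact final
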